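/- For 1 ≤ r ≤ n and 0 < ε < 1/2, the maximal ε-separated subset of V_r = {v ∈ R^n : ‖v‖₀ ≤ r, ‖v‖₂ = 1} with respect to the Euclidean norm has cardinality at most (3en/(rε))^r. -/

import Mathlib

open Finset Real

section helpers
open MeasureTheory Metric ENNReal Module

lemma packing_lemma {r : ℕ} (hr : 0 < r) {ε : ℝ} (hε : 0 < ε)
    (s : Finset (EuclideanSpace ℝ (Fin r)))
    (hball : ∀ x ∈ s, ‖x‖ ≤ 1)
    (hsep : ∀ x ∈ s, ∀ y ∈ s, x ≠ y → ε ≤ dist x y) :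
    (s.card : ℝ) ≤ ((1 + ε / 2) / (ε / 2)) ^ r := by
  haveI : Nontrivial (EuclideanSpace ℝ (Fin r)) := by
    refine ⟨WithLp.toLp 2 (fun _ => 0 : Fin r → ℝ), WithLp.toLp 2 (fun _ => 1), fun h => ?_⟩
    have := congrArg (fun v : EuclideanSpace ℝ (Fin r) => v ⟨0, hr⟩) h
    simp at this
  set μ : Measure (EuclideanSpace ℝ (Fin r)) := volume with hμ
  have hd : finrank ℝ (EuclideanSpace ℝ (Fin r)) = r := finrank_euclideanSpace_fin
  have hε2 : (0:ℝ) < ε / 2 := by linarith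
  have hdisj : (s : Set (EuclideanSpace ℝ (Fin r))).PairwiseDisjoint
      (fun x => ball x (ε / 2)) := by
    intro x hx y hy hxy
    refine Set.disjoint_left.2 fun z hzx hzy => ?_
    have hlt : dist x y < ε := by
      calc dist x y ≤ dist x z + dist z y := dist_triangle _ _ _
        _ < ε / 2 + ε / 2 := by
            rw [dist_comm x z]; exact add_lt_add hzx hzy
        _ = ε := by ring
    linarith [hsep x hx y hy hxy]
  have hsub : (⋃ x ∈ s, ball x (ε / 2)) ⊆ closedBall 0 (1 + ε / 2) := by
    intro z hz
    simp only [Set.mem_iUnion] at hz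
    obtain ⟨x, hx, hzx⟩ := hz
    have h3 : dist z (0 : EuclideanSpace ℝ (Fin r)) ≤ dist z x + dist x 0 := dist_triangle _ _ _
    have hx1 : dist x 0 ≤ 1 := by simpa [dist_eq_norm] using hball x hx
    have hzx' : dist z x < ε / 2 := mem_ball.1 hzx
    simp only [mem_closedBall]
    linarith
  have hmeas : μ (⋃ x ∈ s, ball x (ε / 2)) = ∑ x ∈ s, μ (ball x (ε / 2)) :=
    measure_biUnion_finset hdisj (fun _ _ => measurableSet_ball)
  have hcount : (s.card : ℝ≥0∞) * μ (ball 0 (ε / 2)) ≤ μ (closedBall 0 (1 + ε / 2)) := by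
    calc (s.card : ℝ≥0∞) * μ (ball 0 (ε / 2))
        = ∑ _x ∈ s, μ (ball (0 : EuclideanSpace ℝ (Fin r)) (ε / 2)) := by
          rw [Finset.sum_const, nsmul_eq_mul]
      _ = ∑ x ∈ s, μ (ball x (ε / 2)) := by
          refine Finset.sum_congr rfl fun x _ => ?_
          rw [Measure.addHaar_ball_center μ x]
      _ = μ (⋃ x ∈ s, ball x (ε / 2)) := hmeas.symm
      _ ≤ μ (closedBall 0 (1 + ε / 2)) := measure_mono hsub
  rw [Measure.addHaar_ball μ 0 hε2.le,
    Measure.addHaar_closedBall μ 0 (by linarith : (0:ℝ) ≤ 1 + ε/2), ← mul_assoc] at hcount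
  have hBpos : 0 < μ (ball (0 : EuclideanSpace ℝ (Fin r)) 1) := measure_ball_pos _ _ one_pos
  have hBfin : μ (ball (0 : EuclideanSpace ℝ (Fin r)) 1) ≠ ⊤ := measure_ball_lt_top.ne
  rw [ENNReal.mul_le_mul_iff_left hBpos.ne' hBfin] at hcount
  have hc2 : ENNReal.ofReal ((s.card : ℝ) * (ε / 2) ^ finrank ℝ (EuclideanSpace ℝ (Fin r)))
      ≤ ENNReal.ofReal ((1 + ε / 2) ^ finrank ℝ (EuclideanSpace ℝ (Fin r))) := by
    rwa [ENNReal.ofReal_mul (by positivity), ENNReal.ofReal_natCast]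
  have hc3 : (s.card : ℝ) * (ε / 2) ^ finrank ℝ (EuclideanSpace ℝ (Fin r))
      ≤ (1 + ε / 2) ^ finrank ℝ (EuclideanSpace ℝ (Fin r)) :=
    (ENNReal.ofReal_le_ofReal_iff (by positivity)).1 hc2
  rw [hd] at hc3
  rw [div_pow, le_div_iff₀ (by positivity)]
  exact hc3

lemma choose_bound (n r : ℕ) (hr : 1 ≤ r) :
    (n.choose r : ℝ) ≤ (Real.exp 1 * n / r) ^ r := by
  have h1 : (n.choose r : ℝ) ≤ (n : ℝ) ^ r / (r.factorial : ℝ) :=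
    Nat.choose_le_pow_div r n
  have h2 : (r : ℝ) ^ r / (r.factorial : ℝ) ≤ Real.exp r :=
    Real.pow_div_factorial_le_exp (x := (r:ℝ)) (by positivity) r
  have hrpos : (0:ℝ) < r := by exact_mod_cast hr
  have hfac : (0:ℝ) < r.factorial := by exact_mod_cast r.factorial_pos
  have h3 : (1 : ℝ) / r.factorial ≤ Real.exp r / (r:ℝ)^r := by
    rw [div_le_div_iff₀ hfac (by positivity)]
    rw [div_le_iff₀ hfac] at h2
    linarith [h2]
  calc (n.choose r : ℝ) ≤ (n : ℝ) ^ r / (r.factorial : ℝ) := h1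
    _ = (n:ℝ)^r * (1 / r.factorial) := by ring
    _ ≤ (n:ℝ)^r * (Real.exp r / (r:ℝ)^r) :=
        mul_le_mul_of_nonneg_left h3 (by positivity)
    _ = (Real.exp 1 * n / r) ^ r := by
        rw [div_pow, mul_pow, Real.exp_one_pow]
        ring

end helpers

noncomputable def l2norm {n : ℕ} (v : Fin n → ℝ) : ℝ := Real.sqrt (∑ i, v i ^ 2)

noncomputable def l0norm {n : ℕ} (v : Fin n → ℝ) : ℕ :=
  (Finset.univ.filter (fun i => v i ≠ 0)).card

/-- the set of r-sparse unit ℓ2-norm vectors -/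
def sparseSphere (n r : ℕ) : Set (Fin n → ℝ) :=
  {v | l0norm v ≤ r ∧ l2norm v = 1}

/-- An ε-separated subset of V_r has cardinality at most (3en/(rε))^r. -/
theorem stmt10 (n r : ℕ) (hr : 1 ≤ r) (hrn : r ≤ n) (ε : ℝ) (hε : 0 < ε) (hε2 : ε < 1/2)
    (T : Set (Fin n → ℝ)) (hT : T ⊆ sparseSphere n r)
    (hsep : ∀ x ∈ T, ∀ y ∈ T, x ≠ y → ε ≤ l2norm (x - y)) :
    (Nat.card T : ℝ) ≤ (3 * Real.exp 1 * n / (r * ε)) ^ r := by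
  classical
  have hrpos : (0:ℝ) < r := by exact_mod_cast hr
  have hRHS : (0:ℝ) ≤ (3 * Real.exp 1 * n / (r * ε)) ^ r := by positivity
  rcases T.finite_or_infinite with hfin | hinf
  swap
  · haveI := Set.infinite_coe_iff.mpr hinf
    rw [Nat.card_eq_zero_of_infinite]
    simpa using hRHS
  have hcard : Nat.card T = hfin.toFinset.card := by
    rw [Nat.card_coe_set_eq, Set.ncard_eq_toFinset_card _ hfin]
  set F := hfin.toFinset with hF
  have hmemF : ∀ v, v ∈ F ↔ v ∈ T := fun v => hfin.mem_toFinset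
  -- assign to each v a support superset of size r
  have hchoice : ∀ v : Fin n → ℝ, v ∈ F → ∃ S : Finset (Fin n),
      (Finset.univ.filter (fun i => v i ≠ 0)) ⊆ S ∧ S.card = r := by
    intro v hv
    have h0 : l0norm v ≤ r := (hT ((hmemF v).1 hv)).1
    exact Finset.exists_superset_card_eq h0 (by simpa using hrn)
  choose! f hf1 hf2 using hchoice
  have hmap : ∀ v ∈ F, f v ∈ Finset.powersetCard r Finset.univ := fun v hv =>
    Finset.mem_powersetCard.2 ⟨Finset.subset_univ _, hf2 v hv⟩
  -- fiberwise bound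
  have key : ∀ S ∈ Finset.powersetCard r (Finset.univ : Finset (Fin n)),
      ((F.filter (fun v => f v = S)).card : ℝ) ≤ (3 / ε) ^ r := by
    intro S hS
    have hScard : S.card = r := (Finset.mem_powersetCard.1 hS).2
    set Fib := F.filter (fun v => f v = S) with hFib
    -- support vanishing
    have hsupp : ∀ v ∈ Fib, ∀ i, i ∉ S → v i = 0 := by
      intro v hv i hiS
      obtain ⟨hvF, hvS⟩ := Finset.mem_filter.1 hv
      by_contra hvi
      exact hiS (hvS ▸ hf1 v hvF (Finset.mem_filter.2 ⟨Finset.mem_univ i, hvi⟩))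
    have e : {x // x ∈ S} ≃ Fin r :=
      Fintype.equivFinOfCardEq (by rw [Fintype.card_coe, hScard])
    set g : (Fin n → ℝ) → EuclideanSpace ℝ (Fin r) := fun v => WithLp.toLp 2 (fun j => v (e.symm j).1) with hg
    -- sum identity for supported vectors
    have hsum : ∀ w : Fin n → ℝ, (∀ i, i ∉ S → w i = 0) →
        ∑ j, (g w j) ^ 2 = ∑ i, w i ^ 2 := by
      intro w hw
      have h1 : ∑ j, (g w j) ^ 2 = ∑ i : {x // x ∈ S}, w i.1 ^ 2 :=
        Equiv.sum_comp e.symm (fun i : {x // x ∈ S} => w i.1 ^ 2)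
      have h2 : ∑ i : {x // x ∈ S}, w i.1 ^ 2 = ∑ i ∈ S, w i ^ 2 :=
        Finset.sum_coe_sort S (fun i => w i ^ 2)
      have h3 : ∑ i ∈ S, w i ^ 2 = ∑ i, w i ^ 2 :=
        Finset.sum_subset (Finset.subset_univ S) (fun i _ hi => by rw [hw i hi]; ring)
      rw [h1, h2, h3]
    have hnorm : ∀ w : Fin n → ℝ, (∀ i, i ∉ S → w i = 0) → ‖g w‖ = l2norm w := by
      intro w hw
      rw [EuclideanSpace.norm_eq, l2norm]
      congr 1
      rw [← hsum w hw]
      exact Finset.sum_congr rfl fun j _ => by rw [Real.norm_eq_abs, sq_abs]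
    have hgsub : ∀ x y : Fin n → ℝ, g x - g y = g (x - y) := by
      intro x y; rfl
    -- image
    set s' := Fib.image g with hs'
    have hinjOn : Set.InjOn g Fib := by
      intro x hx y hy hxy
      by_contra hne
      have hxT := (hmemF x).1 (Finset.mem_filter.1 hx).1
      have hyT := (hmemF y).1 (Finset.mem_filter.1 hy).1
      have hsepxy := hsep x hxT y hyT hne
      have hsuppxy : ∀ i, i ∉ S → (x - y) i = 0 := by
        intro i hi
        simp [Pi.sub_apply, hsupp x hx i hi, hsupp y hy i hi]
      have : l2norm (x - y) = 0 := by
        rw [← hnorm _ hsuppxy, ← hgsub, hxy, sub_self, norm_zero]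
      linarith
    have hcard' : s'.card = Fib.card := Finset.card_image_of_injOn hinjOn
    have hball : ∀ z ∈ s', ‖z‖ ≤ 1 := by
      intro z hz
      obtain ⟨v, hv, rfl⟩ := Finset.mem_image.1 hz
      have hvT := (hmemF v).1 (Finset.mem_filter.1 hv).1
      rw [hnorm v (hsupp v hv), (hT hvT).2]
    have hsep' : ∀ z ∈ s', ∀ w ∈ s', z ≠ w → ε ≤ dist z w := by
      intro z hz w hw hzw
      obtain ⟨x, hx, rfl⟩ := Finset.mem_image.1 hz
      obtain ⟨y, hy, rfl⟩ := Finset.mem_image.1 hw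
      have hne : x ≠ y := fun h => hzw (by rw [h])
      have hxT := (hmemF x).1 (Finset.mem_filter.1 hx).1
      have hyT := (hmemF y).1 (Finset.mem_filter.1 hy).1
      have hsuppxy : ∀ i, i ∉ S → (x - y) i = 0 := by
        intro i hi
        simp [Pi.sub_apply, hsupp x hx i hi, hsupp y hy i hi]
      rw [dist_eq_norm, hgsub, hnorm _ hsuppxy]
      exact hsep x hxT y hyT hne
    have hpack := packing_lemma (Nat.lt_of_lt_of_le Nat.zero_lt_one hr) hε s' hball hsep'
    rw [hcard'] at hpack
    refine hpack.trans (pow_le_pow_left₀ (by positivity) ?_ r)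
    rw [div_le_div_iff₀ (by linarith) hε]
    nlinarith
  -- put it together
  rw [hcard, Finset.card_eq_sum_card_fiberwise hmap]
  push_cast
  calc (∑ S ∈ Finset.powersetCard r (Finset.univ : Finset (Fin n)),
        ((F.filter (fun v => f v = S)).card : ℝ))
      ≤ ∑ _S ∈ Finset.powersetCard r (Finset.univ : Finset (Fin n)), (3 / ε) ^ r :=
        Finset.sum_le_sum key
    _ = (n.choose r : ℝ) * (3 / ε) ^ r := by
        rw [Finset.sum_const, nsmul_eq_mul, Finset.card_powersetCard, Finset.card_univ,
          Fintype.card_fin]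
    _ ≤ (Real.exp 1 * n / r) ^ r * (3 / ε) ^ r := by
        refine mul_le_mul_of_nonneg_right (choose_bound n r hr) (by positivity)
    _ = (3 * Real.exp 1 * n / (r * ε)) ^ r := by
        rw [← mul_pow]
        congr 1
        field_simp
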